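/- Let n and x be natural numbers such that the burst length x + 2 satisfies the cyclic burst constraint x + 2 ≤ ⌊(n+1)/2⌋. Then Σ_{y=0}^{x} Σ_{z=0}^{x} F(x, y, z, n) = 2^x. -/

import Mathlib

/-- `A(c, d, e) = Σ_{j ∈ J} (-1)^j · C(d+1, j) · C(c - j(e+1), d)` where
`J = { j : 0 ≤ j ≤ d + 1, c - j(e+1) ≥ 0 }`. -/
def Aform (c d e : ℕ) : ℤ :=
  ∑ j ∈ (Finset.range (d + 2)).filter (fun j => j * (e + 1) ≤ c),
    (-1 : ℤ) ^ j * ((d + 1).choose j : ℤ) * (((c - j * (e + 1)).choose d : ℕ) : ℤ)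

/-- `B(x, y, z) = A(x, y, z) - A(x, y, z - 1)`, with `A(x, y, -1) := 0`. -/
def Bform (x y z : ℕ) : ℤ :=
  Aform x y z - (if z = 0 then 0 else Aform x y (z - 1))

/-- `F(x, y, z, n) = 1` if `y = 0`, `x = z` and `x < ⌊n/2⌋ - 2`, else `B(x, y, z)`. -/
def Fform (x y z n : ℕ) : ℤ :=
  if y = 0 ∧ x = z ∧ x < n / 2 - 2 then 1 else Bform x y z

lemma Aform_top (x y : ℕ) : Aform x y x = (x.choose y : ℤ) := by
  unfold Aform
  have hf : (Finset.range (y + 2)).filter (fun j => j * (x + 1) ≤ x) = {0} := by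
    ext j
    simp only [Finset.mem_filter, Finset.mem_range, Finset.mem_singleton]
    constructor
    · rintro ⟨_, hj⟩
      by_contra hne
      have : 1 ≤ j := Nat.one_le_iff_ne_zero.mpr hne
      nlinarith
    · rintro rfl; simp
  rw [hf]
  simp

lemma Bform_diag (x : ℕ) : Bform x 0 x = 1 := by
  unfold Bform
  rcases Nat.eq_zero_or_pos x with rfl | hx
  · simp [Aform_top]
  · have hx0 : x ≠ 0 := hx.ne'
    rw [if_neg hx0, Aform_top]
    have hprev : Aform x 0 (x - 1) = 0 := by
      unfold Aform
      have hxx : x - 1 + 1 = x := Nat.succ_pred_eq_of_pos hx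
      have hf : (Finset.range 2).filter (fun j => j * (x - 1 + 1) ≤ x) = Finset.range 2 := by
        apply Finset.filter_true_of_mem
        intro j hj
        simp only [Finset.mem_range] at hj
        interval_cases j <;> simp [hxx]
      rw [hf, Finset.sum_range_succ, Finset.sum_range_succ, Finset.sum_range_zero]
      simp [hxx]
    rw [hprev]
    simp

lemma sumB (x y : ℕ) : ∑ z ∈ Finset.range (x + 1), Bform x y z = Aform x y x := by
  rw [Finset.sum_range_succ']
  have h1 : ∀ i, Bform x y (i + 1) = Aform x y (i + 1) - Aform x y i := by
    intro i; simp [Bform]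
  have h0 : Bform x y 0 = Aform x y 0 := by simp [Bform]
  simp only [h1, h0]
  rw [Finset.sum_range_sub (fun z => Aform x y z)]
  ring

theorem stmt8 (n x : ℕ) (h : x + 2 ≤ (n + 1) / 2) :
    ∑ y ∈ Finset.range (x + 1), ∑ z ∈ Finset.range (x + 1), Fform x y z n
      = (2 : ℤ) ^ x := by
  have hF : ∀ y z, Fform x y z n = Bform x y z := by
    intro y z
    unfold Fform
    split_ifs with hc
    · obtain ⟨rfl, rfl, -⟩ := hc
      exact (Bform_diag x).symm
    · rfl
  simp only [hF, sumB, Aform_top]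
  rw [← Nat.cast_sum]
  rw [Nat.sum_range_choose]
  push_cast
  ring
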